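/- Let n ≤ m be positive integers and let K be a simplicial complex on the set [m] all of whose members have at most n elements; let f_{j−1} be the number of j-element members of K (f_{−1} = 1), let h_k = Σ_{i=0}^{k} (−1)^{k−i}·binom(n−i, k−i)·f_{i−1} for 0 ≤ k ≤ n, and let χ(K) = Σ_{s=1}^{n} (−1)^{s−1} f_{s−1} be the Euler characteristic of K. For 0 ≤ r ≤ m set χ_r = Σ (−1)^{j+p}·f_{i+j+l−1}·binom(i+j+l, i)·binom(j+l, l)·binom(m−i−j−l, p), the sum being over all nonnegative integers i, j, l, p with i + p = r and l ≥ 1. Then the following identity of polynomials in ℤ[t] holds: Σ_{r=0}^{m} χ_r·t^{2r} = (1−t²)^{m−n}·(h_0 + h_1 t² + ⋯ + h_n t^{2n}) + (χ(K) − 1)·(1−t²)^m. -/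
import Mathlib

open Polynomial
open Finset

set_option maxHeartbeats 1000000
variable {R : Type*} [CommRing R]

lemma triangle {R : Type*} [CommRing R] (m : ℕ) (G : ℕ → ℕ → R) :
    ∑ r ∈ range (m+1), ∑ i ∈ range (r+1), G i (r - i)
      = ∑ i ∈ range (m+1), ∑ p ∈ range (m+1-i), G i p := by
  induction m with
  | zero => simp
  | succ m ih =>
    rw [Finset.sum_range_succ (fun r => ∑ i ∈ range (r+1), G i (r - i)), ih,
      Finset.sum_range_succ (fun i => ∑ p ∈ range (m+1+1-i), G i p)]
    have h2 : ∀ i ∈ range (m+1), ∑ p ∈ range (m+1+1-i), G i p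
        = ∑ p ∈ range (m+1-i), G i p + G i (m+1-i) := by
      intro i hi
      have hmi : m+1+1-i = (m+1-i)+1 := by
        have := mem_range.mp hi; omega
      rw [hmi, Finset.sum_range_succ]
    rw [Finset.sum_congr rfl h2, Finset.sum_add_distrib,
      Finset.sum_range_succ (fun i => G i (m+1-i))]
    have h3 : m+1+1-(m+1) = 1 := by omega
    rw [h3]
    simp
    ring

lemma binom_ext {R : Type*} [CommRing R] (N M : ℕ) (hNM : N < M) (y : R) :
    ∑ p ∈ range M, (N.choose p : R) * (-y)^p = (1 - y)^N := by
  rw [show (1:R) - y = -y + 1 by ring, add_pow]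
  rw [← Finset.sum_subset (Finset.range_subset_range.mpr (by omega : N+1 ≤ M))
    (fun p _ hp => by
      have : N < p := by simp at hp ⊢; omega
      simp [Nat.choose_eq_zero_of_lt this])]
  exact Finset.sum_congr rfl (fun p _ => by ring)

lemma key (m n : ℕ) (hnm : n ≤ m) (f : ℕ → R) (hf0 : f 0 = 1)
    (hfn : ∀ q, n < q → f q = 0) (y : R) :
    ∑ r ∈ range (m+1),
      (∑ i ∈ range (r+1), ∑ j ∈ range (m+1), ∑ l ∈ Icc 1 m,
        (-1:R)^(j+(r-i)) * f (i+j+l) * ((i+j+l).choose i : R)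
          * ((j+l).choose l : R) * ((m-i-j-l).choose (r-i) : R)) * y^r
    = (1 - y)^(m-n) * (∑ k ∈ range (n+1),
        (∑ i ∈ range (k+1), (-1:R)^(k-i) * ((n-i).choose (k-i) : R) * f i) * y^k)
      + ((∑ s ∈ Icc 1 n, (-1:R)^(s-1) * f s) - 1) * (1 - y)^m := by
  calc
    ∑ r ∈ range (m+1),
      (∑ i ∈ range (r+1), ∑ j ∈ range (m+1), ∑ l ∈ Icc 1 m,
        (-1:R)^(j+(r-i)) * f (i+j+l) * ((i+j+l).choose i : R)
          * ((j+l).choose l : R) * ((m-i-j-l).choose (r-i) : R)) * y^r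
      = ∑ r ∈ range (m+1), ∑ i ∈ range (r+1),
          (∑ j ∈ range (m+1), ∑ l ∈ Icc 1 m,
            (-1:R)^(j+(r-i)) * f (i+j+l) * ((i+j+l).choose i : R)
              * ((j+l).choose l : R) * ((m-i-j-l).choose (r-i) : R)) * (y^i * y^(r-i)) := by
        refine Finset.sum_congr rfl (fun r hr => ?_)
        rw [Finset.sum_mul]
        refine Finset.sum_congr rfl (fun i hi => ?_)
        rw [← pow_add, Nat.add_sub_cancel' (by have := mem_range.mp hi; omega : i ≤ r)]
    _ = ∑ i ∈ range (m+1), ∑ p ∈ range (m+1-i),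
          (∑ j ∈ range (m+1), ∑ l ∈ Icc 1 m,
            (-1:R)^(j+p) * f (i+j+l) * ((i+j+l).choose i : R)
              * ((j+l).choose l : R) * ((m-i-j-l).choose p : R)) * (y^i * y^p) :=
        triangle m (fun i p =>
          (∑ j ∈ range (m+1), ∑ l ∈ Icc 1 m,
            (-1:R)^(j+p) * f (i+j+l) * ((i+j+l).choose i : R)
              * ((j+l).choose l : R) * ((m-i-j-l).choose p : R)) * (y^i * y^p))
    _ = ∑ i ∈ range (m+1), ∑ j ∈ range (m+1), ∑ l ∈ Icc 1 m,
          f (i+j+l) * (1-y)^(m-(i+j+l))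
            * ((-1:R)^j * ((i+j+l).choose i : R) * ((j+l).choose l : R) * y^i) := by
        refine Finset.sum_congr rfl (fun i hi => ?_)
        have him : i ≤ m := by have := mem_range.mp hi; omega
        calc
          ∑ p ∈ range (m+1-i),
            (∑ j ∈ range (m+1), ∑ l ∈ Icc 1 m,
              (-1:R)^(j+p) * f (i+j+l) * ((i+j+l).choose i : R)
                * ((j+l).choose l : R) * ((m-i-j-l).choose p : R)) * (y^i * y^p)
            = ∑ j ∈ range (m+1), ∑ l ∈ Icc 1 m, ∑ p ∈ range (m+1-i),
                (-1:R)^(j+p) * f (i+j+l) * ((i+j+l).choose i : R)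
                  * ((j+l).choose l : R) * ((m-i-j-l).choose p : R) * (y^i * y^p) := by
              simp only [Finset.sum_mul]
              rw [Finset.sum_comm]
              exact Finset.sum_congr rfl (fun j _ => Finset.sum_comm)
          _ = ∑ j ∈ range (m+1), ∑ l ∈ Icc 1 m,
                f (i+j+l) * (1-y)^(m-(i+j+l))
                  * ((-1:R)^j * ((i+j+l).choose i : R) * ((j+l).choose l : R) * y^i) := by
              refine Finset.sum_congr rfl (fun j hj => Finset.sum_congr rfl (fun l hl => ?_))
              by_cases hq : n < i+j+l
              · simp [hfn _ hq]
              · push_neg at hq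
                have hsub : m-i-j-l = m-(i+j+l) := by omega
                have hlt : m-(i+j+l) < m+1-i := by omega
                rw [hsub, ← binom_ext (m-(i+j+l)) (m+1-i) hlt y, Finset.mul_sum,
                  Finset.sum_mul]
                refine Finset.sum_congr rfl (fun p _ => ?_)
                rw [pow_add, neg_pow y p]
                ring
    _ = ∑ q ∈ range (n+1), f q * (1-y)^(m-q) *
          (∑ i ∈ range (m+1), ∑ j ∈ range (m+1), ∑ l ∈ Icc 1 m,
            if i+j+l = q then
              (-1:R)^j * ((i+j+l).choose i : R) * ((j+l).choose l : R) * y^i else 0) := by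
        have hpoint : ∀ (c : R) (s : ℕ), f s * (1-y)^(m-s) * c
            = ∑ q ∈ range (n+1), (if s = q then f q * (1-y)^(m-q) * c else 0) := by
          intro c s
          by_cases hs : s ≤ n
          · rw [Finset.sum_ite_eq (range (n+1)) s (fun q => f q * (1-y)^(m-q) * c),
              if_pos (mem_range.mpr (by omega))]
          · push_neg at hs
            rw [hfn s hs, zero_mul, zero_mul]
            exact (Finset.sum_eq_zero fun q hq =>
              if_neg (by have := mem_range.mp hq; omega)).symm
        calc
          ∑ i ∈ range (m+1), ∑ j ∈ range (m+1), ∑ l ∈ Icc 1 m,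
            f (i+j+l) * (1-y)^(m-(i+j+l))
              * ((-1:R)^j * ((i+j+l).choose i : R) * ((j+l).choose l : R) * y^i)
            = ∑ i ∈ range (m+1), ∑ j ∈ range (m+1), ∑ l ∈ Icc 1 m, ∑ q ∈ range (n+1),
                (if i+j+l = q then f q * (1-y)^(m-q)
                  * ((-1:R)^j * ((i+j+l).choose i : R) * ((j+l).choose l : R) * y^i)
                 else 0) :=
              Finset.sum_congr rfl fun i _ => Finset.sum_congr rfl fun j _ =>
                Finset.sum_congr rfl fun l _ => hpoint _ _
          _ = ∑ i ∈ range (m+1), ∑ j ∈ range (m+1), ∑ q ∈ range (n+1), ∑ l ∈ Icc 1 m,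
                (if i+j+l = q then f q * (1-y)^(m-q)
                  * ((-1:R)^j * ((i+j+l).choose i : R) * ((j+l).choose l : R) * y^i)
                 else 0) :=
              Finset.sum_congr rfl fun i _ => Finset.sum_congr rfl fun j _ =>
                Finset.sum_comm
          _ = ∑ i ∈ range (m+1), ∑ q ∈ range (n+1), ∑ j ∈ range (m+1), ∑ l ∈ Icc 1 m,
                (if i+j+l = q then f q * (1-y)^(m-q)
                  * ((-1:R)^j * ((i+j+l).choose i : R) * ((j+l).choose l : R) * y^i)
                 else 0) :=
              Finset.sum_congr rfl fun i _ => Finset.sum_comm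
          _ = ∑ q ∈ range (n+1), ∑ i ∈ range (m+1), ∑ j ∈ range (m+1), ∑ l ∈ Icc 1 m,
                (if i+j+l = q then f q * (1-y)^(m-q)
                  * ((-1:R)^j * ((i+j+l).choose i : R) * ((j+l).choose l : R) * y^i)
                 else 0) :=
              Finset.sum_comm
          _ = ∑ q ∈ range (n+1), f q * (1-y)^(m-q) *
                (∑ i ∈ range (m+1), ∑ j ∈ range (m+1), ∑ l ∈ Icc 1 m,
                  if i+j+l = q then
                    (-1:R)^j * ((i+j+l).choose i : R) * ((j+l).choose l : R) * y^i
                  else 0) := by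
              simp only [Finset.mul_sum, mul_ite, mul_zero]
    _ = ∑ q ∈ range (n+1), f q * (1-y)^(m-q) * (y^q - (y-1)^q) := by
        have alt : ∀ u : ℕ, 1 ≤ u →
            ∑ j ∈ range u, (-1:R)^j * (u.choose j : R) = -(-1:R)^u := by
          intro u hu
          have h0 : ∑ j ∈ range (u+1), (-1:R)^j * (u.choose j : R) = 0 := by
            have h := Int.alternating_sum_range_choose (n := u)
            rw [if_neg (by omega)] at h
            have := congrArg (fun z : ℤ => (z : R)) h
            push_cast at this
            simpa using this
          rw [Finset.sum_range_succ, Nat.choose_self] at h0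
          push_cast at h0
          linear_combination h0
        refine Finset.sum_congr rfl fun q hq => ?_
        have hqn : q ≤ n := by have := mem_range.mp hq; omega
        congr 1
        calc
          ∑ i ∈ range (m+1), ∑ j ∈ range (m+1), ∑ l ∈ Icc 1 m,
            (if i+j+l = q then
              (-1:R)^j * ((i+j+l).choose i : R) * ((j+l).choose l : R) * y^i else 0)
            = ∑ i ∈ range (m+1), ∑ j ∈ range (m+1),
                (if i+j+1 ≤ q then (-1:R)^j * (q.choose i : R) * ((q-i).choose j : R) * y^i
                 else 0) := by
              refine Finset.sum_congr rfl fun i _ => Finset.sum_congr rfl fun j _ => ?_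
              by_cases hc : i+j+1 ≤ q
              · rw [if_pos hc, Finset.sum_eq_single (q-i-j)]
                · have e1 : i+j+(q-i-j) = q := by omega
                  have e2 : j+(q-i-j) = q-i := by omega
                  rw [if_pos e1, e1, e2,
                    Nat.choose_symm (by omega : j ≤ q-i)]
                · intro l _ hlne
                  exact if_neg (by omega)
                · intro habs
                  exact absurd (mem_Icc.mpr ⟨by omega, by omega⟩) habs
              · rw [if_neg hc]
                exact Finset.sum_eq_zero fun l hl =>
                  if_neg (by have := mem_Icc.mp hl; omega)
          _ = ∑ i ∈ range (m+1),
                (if i < q then -(-1:R)^(q-i) * (q.choose i : R) * y^i else 0) := by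
              refine Finset.sum_congr rfl fun i _ => ?_
              by_cases hiq : i < q
              · rw [if_pos hiq, ← Finset.sum_filter]
                have hfil : (range (m+1)).filter (fun j => i+j+1 ≤ q) = range (q-i) := by
                  ext j; simp only [mem_filter, mem_range]; omega
                rw [hfil]
                have hfac : ∑ j ∈ range (q-i),
                    (-1:R)^j * (q.choose i : R) * ((q-i).choose j : R) * y^i
                    = ((q.choose i : R) * y^i)
                      * ∑ j ∈ range (q-i), (-1:R)^j * ((q-i).choose j : R) := by
                  rw [Finset.mul_sum]
                  exact Finset.sum_congr rfl fun j _ => by ring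
                rw [hfac, alt (q-i) (by omega)]
                ring
              · rw [if_neg hiq]
                exact Finset.sum_eq_zero fun j _ => if_neg (by omega)
          _ = y^q - (y-1)^q := by
              rw [← Finset.sum_filter]
              have hfil : (range (m+1)).filter (fun i => i < q) = range q := by
                ext i; simp only [mem_filter, mem_range]; omega
              rw [hfil]
              have hb : ∑ i ∈ range (q+1), y^i * (-1:R)^(q-i) * (q.choose i : R)
                  = (y-1)^q := by
                rw [sub_eq_add_neg, add_pow]
              rw [Finset.sum_range_succ] at hb
              have hneg : ∑ i ∈ range q, -(-1:R)^(q-i) * (q.choose i : R) * y^i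
                  = -(∑ i ∈ range q, y^i * (-1:R)^(q-i) * (q.choose i : R)) := by
                rw [← Finset.sum_neg_distrib]
                exact Finset.sum_congr rfl fun i _ => by ring
              rw [hneg]
              simp only [Nat.sub_self, pow_zero, Nat.choose_self, Nat.cast_one,
                mul_one, one_mul] at hb
              linear_combination -hb
    _ = (1 - y)^(m-n) * (∑ k ∈ range (n+1),
          (∑ i ∈ range (k+1), (-1:R)^(k-i) * ((n-i).choose (k-i) : R) * f i) * y^k)
        + ((∑ s ∈ Icc 1 n, (-1:R)^(s-1) * f s) - 1) * (1 - y)^m := by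
        calc
          ∑ q ∈ range (n+1), f q * (1-y)^(m-q) * (y^q - (y-1)^q)
            = (1-y)^(m-n) * (∑ q ∈ range (n+1), f q * y^q * (1-y)^(n-q))
              - (∑ q ∈ range (n+1), (-1:R)^q * f q) * (1-y)^m := by
              rw [Finset.mul_sum, Finset.sum_mul, ← Finset.sum_sub_distrib]
              refine Finset.sum_congr rfl fun q hq => ?_
              have hqn : q ≤ n := by have := mem_range.mp hq; omega
              have e1 : (1-y : R)^(m-q) = (1-y)^(m-n) * (1-y)^(n-q) := by
                rw [← pow_add]; congr 1; omega
              have e2 : (y-1:R)^q * (1-y)^(m-q) = (-1)^q * (1-y)^m := by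
                rw [show (y-1:R) = -(1-y) by ring, neg_pow, mul_assoc, ← pow_add,
                  show q + (m-q) = m by omega]
              linear_combination (f q * y^q) * e1 - f q * e2
          _ = (1 - y)^(m-n) * (∑ k ∈ range (n+1),
                (∑ i ∈ range (k+1), (-1:R)^(k-i) * ((n-i).choose (k-i) : R) * f i) * y^k)
              + ((∑ s ∈ Icc 1 n, (-1:R)^(s-1) * f s) - 1) * (1 - y)^m := by
              have hfh : ∑ q ∈ range (n+1), f q * y^q * (1-y)^(n-q)
                  = ∑ k ∈ range (n+1),
                    (∑ i ∈ range (k+1), (-1:R)^(k-i) * ((n-i).choose (k-i) : R) * f i)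
                      * y^k := by
                calc
                  ∑ q ∈ range (n+1), f q * y^q * (1-y)^(n-q)
                    = ∑ q ∈ range (n+1), ∑ d ∈ range (n+1-q),
                        (-1:R)^d * ((n-q).choose d : R) * f q * y^(q+d) := by
                      refine Finset.sum_congr rfl fun q hq => ?_
                      have hqn : q ≤ n := by have := mem_range.mp hq; omega
                      rw [← binom_ext (n-q) (n+1-q) (by omega) y, Finset.mul_sum]
                      refine Finset.sum_congr rfl fun d _ => ?_
                      rw [neg_pow y d, pow_add]
                      ring
                  _ = ∑ k ∈ range (n+1), ∑ q ∈ range (k+1),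
                        (-1:R)^(k-q) * ((n-q).choose (k-q) : R) * f q * y^(q+(k-q)) :=
                      (triangle n (fun q d =>
                        (-1:R)^d * ((n-q).choose d : R) * f q * y^(q+d))).symm
                  _ = ∑ k ∈ range (n+1),
                        (∑ i ∈ range (k+1),
                          (-1:R)^(k-i) * ((n-i).choose (k-i) : R) * f i) * y^k := by
                      refine Finset.sum_congr rfl fun k _ => ?_
                      rw [Finset.sum_mul]
                      refine Finset.sum_congr rfl fun q hq => ?_
                      rw [show q + (k-q) = k by have := mem_range.mp hq; omega]
              have hchi : ∑ q ∈ range (n+1), (-1:R)^q * f q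
                  = 1 - ∑ s ∈ Icc 1 n, (-1:R)^(s-1) * f s := by
                rw [Finset.sum_range_succ']
                have hIcc : ∑ s ∈ Icc 1 n, (-1:R)^(s-1) * f s
                    = ∑ i ∈ range n, (-1:R)^i * f (1+i) := by
                  rw [← Finset.Ico_add_one_right_eq_Icc, Finset.sum_Ico_eq_sum_range]
                  have hr : n + 1 - 1 = n := by omega
                  rw [hr]
                  refine Finset.sum_congr rfl fun i _ => ?_
                  rw [show 1 + i - 1 = i by omega]
                rw [hIcc, pow_zero, one_mul, hf0]
                have : ∑ i ∈ range n, (-1:R)^(i+1) * f (i+1)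
                    = -∑ i ∈ range n, (-1:R)^i * f (1+i) := by
                  rw [← Finset.sum_neg_distrib]
                  refine Finset.sum_congr rfl fun i _ => ?_
                  rw [show 1 + i = i + 1 by omega, pow_succ]
                  ring
                rw [this]
                ring
              rw [hfh, hchi]
              ring

/-- Theorem (chitwk): χ(W_K; t) = (1−t²)^{m−n}(h₀ + h₁t² + ⋯ + hₙt^{2n}) + (χ(K)−1)(1−t²)^m.
Here `f j` is the number of members of `K` with exactly `j` elements, and
χ_r = Σ_{i+p=r, l≥1} (−1)^{j+p} f_{i+j+l−1} C(i+j+l,i) C(j+l,l) C(m−i−j−l,p).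
The ranges `j ≤ m`, `1 ≤ l ≤ m` capture all nonzero terms since `f` vanishes
beyond `m ≥ n`. -/
theorem stmt1 (m n : ℕ) (hn : 1 ≤ n) (hnm : n ≤ m)
    (K : Finset (Finset (Fin m)))
    (hK : ∀ I ∈ K, ∀ J ⊆ I, J ∈ K) (hempty : ∅ ∈ K)
    (hdim : ∀ I ∈ K, I.card ≤ n)
    (f : ℕ → ℤ)
    (hf : ∀ j, f j = ((K.filter (fun I => I.card = j)).card : ℤ))
    (h : ℕ → ℤ)
    (hh : ∀ k, h k = ∑ i ∈ Finset.range (k + 1),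
      (-1 : ℤ) ^ (k - i) * (Nat.choose (n - i) (k - i) : ℤ) * f i)
    (χK : ℤ)
    (hχK : χK = ∑ s ∈ Finset.Icc 1 n, (-1 : ℤ) ^ (s - 1) * f s)
    (χ : ℕ → ℤ)
    (hχ : ∀ r, χ r = ∑ i ∈ Finset.range (r + 1), ∑ j ∈ Finset.range (m + 1),
      ∑ l ∈ Finset.Icc 1 m,
        (-1 : ℤ) ^ (j + (r - i)) * f (i + j + l) * (Nat.choose (i + j + l) i : ℤ)
          * (Nat.choose (j + l) l : ℤ) * (Nat.choose (m - i - j - l) (r - i) : ℤ)) :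
    ∑ r ∈ Finset.range (m + 1), C (χ r) * X ^ (2 * r)
      = (1 - X ^ 2) ^ (m - n) *
          (∑ k ∈ Finset.range (n + 1), C (h k) * X ^ (2 * k))
        + C (χK - 1) * (1 - X ^ 2) ^ m := by
  have hf0 : f 0 = 1 := by
    rw [hf 0]
    have hone : K.filter (fun I => I.card = 0) = {∅} := by
      ext I
      simp only [Finset.mem_filter, Finset.card_eq_zero, Finset.mem_singleton]
      exact ⟨fun h => h.2, fun h => ⟨h ▸ hempty, h⟩⟩
    rw [hone]
    simp
  have hfn : ∀ q, n < q → f q = 0 := by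
    intro q hq
    rw [hf q]
    have hz : K.filter (fun I => I.card = q) = ∅ :=
      Finset.filter_eq_empty_iff.mpr (fun I hI => by have := hdim I hI; omega)
    rw [hz]
    simp
  have hkey := key m n hnm (fun q => (C (f q) : Polynomial ℤ))
    (by simp [hf0]) (fun q hq => by simp [hfn q hq]) (X^2 : Polynomial ℤ)
  simp only [hχ, hh, hχK, map_sum, map_mul, map_pow, map_neg, map_one, map_natCast,
    map_sub, pow_mul]
  exact hkey
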